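/- Let (A, F) and (B, G) be interpreting lattices, M a finite many-valued structure over A and N a finite many-valued structure over B for the same relational language, and g : M → N a protomorphism (i.e., for each relation symbol R and tuple m̄, R^M(m̄) ∈ F implies R^N(g(m̄)) ∈ G). Then for every existential-∧-positive sentence ψ (a finite disjunction of ∧-primitive sentences), if the value of ψ in M lies in F then the value of ψ in N lies in G. -/

import Mathlib

/-- The truth value of an existential-∧-positive sentence
`⋁_{j < d} ∃x̄ ⋀_{i < nc j} R_{sym j i}(x̄_{args j i})` in a finite many-valued
structure over a lattice: the finite join over disjuncts of the join over
assignments of the meet of the atomic values. -/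
def epValue {A : Type*} [Lattice A] {σ : Type*} (ar : σ → ℕ)
    {X : Type*} [Fintype X] [Nonempty X]
    (d : ℕ) (hd : 0 < d) (nv nc : Fin d → ℕ) (hnc : ∀ j, 0 < nc j)
    (sym : ∀ j : Fin d, Fin (nc j) → σ)
    (args : ∀ (j : Fin d) (i : Fin (nc j)), Fin (ar (sym j i)) → Fin (nv j))
    (rel : ∀ s : σ, (Fin (ar s) → X) → A) : A :=
  haveI : Nonempty (Fin d) := Fin.pos_iff_nonempty.mp hd
  Finset.univ.sup' Finset.univ_nonempty fun j =>
    haveI : Nonempty (Fin (nc j)) := Fin.pos_iff_nonempty.mp (hnc j)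
    Finset.univ.sup' Finset.univ_nonempty fun mbar : Fin (nv j) → X =>
      Finset.univ.inf' Finset.univ_nonempty fun i =>
        rel (sym j i) fun k => mbar (args j i k)


private lemma sup'_mem_iff {A : Type*} [Lattice A] (F : Set A)
    (hFjoin : ∀ a b : A, a ⊔ b ∈ F ↔ a ∈ F ∨ b ∈ F)
    {ι : Type*} (s : Finset ι) (hs : s.Nonempty) (f : ι → A) :
    s.sup' hs f ∈ F ↔ ∃ i ∈ s, f i ∈ F := by
  induction hs using Finset.Nonempty.cons_induction with
  | singleton i => simp
  | cons i s hi hs ih =>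
      rw [Finset.sup'_cons, hFjoin, ih]
      simp
      exact hs
private lemma inf'_mem_iff {A : Type*} [Lattice A] (F : Set A)
    (hFmeet : ∀ a b : A, a ⊓ b ∈ F ↔ a ∈ F ∧ b ∈ F)
    {ι : Type*} (s : Finset ι) (hs : s.Nonempty) (f : ι → A) :
    s.inf' hs f ∈ F ↔ ∀ i ∈ s, f i ∈ F := by
  induction hs using Finset.Nonempty.cons_induction with
  | singleton i => simp
  | cons i s hi hs ih =>
      rw [Finset.inf'_cons, hFmeet, ih]
      simp
      exact hs

/-- Protomorphisms between finite many-valued structures over interpreting lattices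
preserve existential-∧-positive sentences: if `g : M → N` maps `F`-true atomic facts
to `G`-true atomic facts, and the value of an e.∧.p-sentence `ψ` in `M` lies in `F`,
then its value in `N` lies in `G`. -/
theorem protomorphism_preserves_eland_positive
    {A : Type*} [Lattice A] (F : Set A)
    (hFmeet : ∀ a b : A, a ⊓ b ∈ F ↔ a ∈ F ∧ b ∈ F)
    (hFjoin : ∀ a b : A, a ⊔ b ∈ F ↔ a ∈ F ∨ b ∈ F)
    {B : Type*} [Lattice B] (G : Set B)
    (hGmeet : ∀ a b : B, a ⊓ b ∈ G ↔ a ∈ G ∧ b ∈ G)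
    (hGjoin : ∀ a b : B, a ⊔ b ∈ G ↔ a ∈ G ∨ b ∈ G)
    {σ : Type*} (ar : σ → ℕ)
    {M : Type*} [Fintype M] [Nonempty M]
    {N : Type*} [Fintype N] [Nonempty N]
    (relM : ∀ s : σ, (Fin (ar s) → M) → A)
    (relN : ∀ s : σ, (Fin (ar s) → N) → B)
    (g : M → N)
    (hproto : ∀ (s : σ) (mbar : Fin (ar s) → M), relM s mbar ∈ F → relN s (g ∘ mbar) ∈ G)
    (d : ℕ) (hd : 0 < d) (nv nc : Fin d → ℕ) (hnc : ∀ j, 0 < nc j)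
    (sym : ∀ j : Fin d, Fin (nc j) → σ)
    (args : ∀ (j : Fin d) (i : Fin (nc j)), Fin (ar (sym j i)) → Fin (nv j)) :
    epValue ar d hd nv nc hnc sym args relM ∈ F →
      epValue ar d hd nv nc hnc sym args relN ∈ G := by
  intro h
  unfold epValue at h ⊢
  rw [sup'_mem_iff F hFjoin] at h
  rw [sup'_mem_iff G hGjoin]
  obtain ⟨j, -, h⟩ := h
  refine ⟨j, Finset.mem_univ _, ?_⟩
  haveI : Nonempty (Fin (nc j)) := Fin.pos_iff_nonempty.mp (hnc j)
  rw [sup'_mem_iff F hFjoin] at h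
  obtain ⟨mbar, -, h⟩ := h
  rw [sup'_mem_iff G hGjoin]
  refine ⟨g ∘ mbar, Finset.mem_univ _, ?_⟩
  rw [inf'_mem_iff F hFmeet] at h
  rw [inf'_mem_iff G hGmeet]
  intro i _
  exact hproto _ _ (h i (Finset.mem_univ i))
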